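/- Fix k with 1 ≤ k ≤ T−2. If h_{k+1} is a belief state for X_{1:k+1}, next-token consistency holds at time k, and transition consistency holds at time k, then h_k is a belief state for X_{1:k}. -/

import Mathlib

open MeasureTheory ProbabilityTheory Filter Topology

noncomputable section

set_option linter.unusedSectionVars false
set_option linter.unusedVariables false
set_option maxHeartbeats 1000000

/-- The tuple of tokens `(X_{s+1}, …, X_{s+n})`. -/
def tup {Ω 𝒳 : Type*} (X : ℕ → Ω → 𝒳) (s n : ℕ) (ω : Ω) : Fin n → 𝒳 :=
  fun i => X (s + 1 + (i : ℕ)) ω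

/-- Real-valued indicator of a set. -/
def ind {Ω : Type*} (A : Set Ω) : Ω → ℝ := A.indicator 1

section BeliefAux

variable {Ω : Type*} [m0 : MeasurableSpace Ω] {μ : Measure Ω}

lemma norm_ind_le (A : Set Ω) (ω : Ω) : ‖ind A ω‖ ≤ 1 := by
  classical
  unfold ind
  rw [Set.indicator_apply]
  split_ifs <;> simp

lemma integrable_of_bdd [IsFiniteMeasure μ] {f : Ω → ℝ} {C : ℝ}
    (hf : AEStronglyMeasurable f μ) (hC : ∀ ω, ‖f ω‖ ≤ C) : Integrable f μ :=
  ⟨hf, HasFiniteIntegral.of_bounded (C := C) (.of_forall hC)⟩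

/-- Two-σ-algebra dominated convergence for conditional expectations. -/
lemma condexp_eq_condexp_of_tendsto [IsFiniteMeasure μ]
    {m₁ m₂ : MeasurableSpace Ω} (hm₁ : m₁ ≤ m0) (hm₂ : m₂ ≤ m0)
    (fs : ℕ → Ω → ℝ) (f : Ω → ℝ) (hfs_int : ∀ n, Integrable (fs n) μ)
    (hfs : ∀ᵐ ω ∂μ, Tendsto (fun n => fs n ω) atTop (𝓝 (f ω)))
    (C : ℝ) (hbound : ∀ n, ∀ᵐ ω ∂μ, ‖fs n ω‖ ≤ C)
    (heq : ∀ n, μ[fs n|m₁] =ᵐ[μ] μ[fs n|m₂]) :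
    μ[f|m₁] =ᵐ[μ] μ[f|m₂] := by
  haveI := isFiniteMeasure_trim (μ := μ) hm₁
  haveI := isFiniteMeasure_trim (μ := μ) hm₂
  have h1 : Tendsto (fun n => condExpL1 hm₁ μ (fs n)) atTop (𝓝 (condExpL1 hm₁ μ f)) :=
    tendsto_condExpL1_of_dominated_convergence hm₁ (fun _ => C) (fun n => (hfs_int n).1)
      (integrable_const C) hbound hfs
  have h2 : Tendsto (fun n => condExpL1 hm₂ μ (fs n)) atTop (𝓝 (condExpL1 hm₂ μ f)) :=
    tendsto_condExpL1_of_dominated_convergence hm₂ (fun _ => C) (fun n => (hfs_int n).1)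
      (integrable_const C) hbound hfs
  have hn : ∀ n, condExpL1 hm₁ μ (fs n) = condExpL1 hm₂ μ (fs n) := by
    intro n
    refine Lp.ext ?_
    exact ((condExp_ae_eq_condExpL1 hm₁ (fs n)).symm.trans ((heq n).trans
      (condExp_ae_eq_condExpL1 hm₂ (fs n))))
  have hlim : condExpL1 hm₁ μ f = condExpL1 hm₂ μ f := by
    refine tendsto_nhds_unique ?_ h2
    simpa only [hn] using h1
  refine (condExp_ae_eq_condExpL1 hm₁ f).trans (.trans ?_ (condExp_ae_eq_condExpL1 hm₂ f).symm)
  rw [hlim]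

/-- Conditional expectations w.r.t. two σ-algebras agree on all bounded `m'`-measurable
functions as soon as they agree on indicators of `m'`-measurable sets. -/
lemma condexp_eq_condexp_of_indicator [IsProbabilityMeasure μ]
    {m' m₁ m₂ : MeasurableSpace Ω} (hm' : m' ≤ m0) (hm₁ : m₁ ≤ m0) (hm₂ : m₂ ≤ m0)
    (hind : ∀ s : Set Ω, MeasurableSet[m'] s → μ[ind s|m₁] =ᵐ[μ] μ[ind s|m₂])
    {v : Ω → ℝ} (hv : StronglyMeasurable[m'] v) {C : ℝ} (hC : 0 ≤ C) (hvC : ∀ ω, ‖v ω‖ ≤ C) :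
    μ[v|m₁] =ᵐ[μ] μ[v|m₂] := by
  letI : MeasurableSpace Ω := m0
  have hsimple : ∀ s : @SimpleFunc Ω m' ℝ, μ[⇑s|m₁] =ᵐ[μ] μ[⇑s|m₂] := by
    refine fun s => @SimpleFunc.induction Ω ℝ m' _ (fun s => μ[⇑s|m₁] =ᵐ[μ] μ[⇑s|m₂]) ?_ ?_ s
    · intro c t ht
      have hpt : ∀ ω : Ω, (⇑(@SimpleFunc.piecewise Ω ℝ m' t ht (@SimpleFunc.const Ω ℝ m' c)
          (@SimpleFunc.const Ω ℝ m' 0))) ω = c • ind t ω := by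
        intro ω
        by_cases hω : ω ∈ t
        · simp [SimpleFunc.piecewise_apply, hω, ind, Set.indicator_of_mem hω]
        · simp [SimpleFunc.piecewise_apply, hω, ind, Set.indicator_of_notMem hω]
      calc μ[⇑(@SimpleFunc.piecewise Ω ℝ m' t ht (@SimpleFunc.const Ω ℝ m' c)
              (@SimpleFunc.const Ω ℝ m' 0))|m₁]
          =ᵐ[μ] μ[fun ω => c • ind t ω|m₁] := condExp_congr_ae (.of_forall hpt)
        _ =ᵐ[μ] c • μ[ind t|m₁] := condExp_smul c (ind t) m₁
        _ =ᵐ[μ] c • μ[ind t|m₂] := (hind t ht).const_smul c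
        _ =ᵐ[μ] μ[fun ω => c • ind t ω|m₂] := (condExp_smul c (ind t) m₂).symm
        _ =ᵐ[μ] _ := condExp_congr_ae (.of_forall fun ω => (hpt ω).symm)
    · intro f g _ hf hg
      have hfi : Integrable (⇑f) μ := by
        obtain ⟨Cf, hCf⟩ := @SimpleFunc.exists_forall_norm_le Ω ℝ m' _ f
        exact integrable_of_bdd ((f.stronglyMeasurable.mono hm').aestronglyMeasurable) hCf
      have hgi : Integrable (⇑g) μ := by
        obtain ⟨Cg, hCg⟩ := @SimpleFunc.exists_forall_norm_le Ω ℝ m' _ g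
        exact integrable_of_bdd ((g.stronglyMeasurable.mono hm').aestronglyMeasurable) hCg
      have hcoe := @SimpleFunc.coe_add Ω ℝ m' _ f g
      rw [hcoe]
      calc μ[⇑f + ⇑g|m₁] =ᵐ[μ] μ[⇑f|m₁] + μ[⇑g|m₁] := condExp_add hfi hgi m₁
        _ =ᵐ[μ] μ[⇑f|m₂] + μ[⇑g|m₂] := hf.add hg
        _ =ᵐ[μ] μ[⇑f + ⇑g|m₂] := (condExp_add hfi hgi m₂).symm
  refine condexp_eq_condexp_of_tendsto hm₁ hm₂ (fun n => hv.approxBounded C n) v ?_ ?_ C ?_ ?_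
  · intro n
    exact integrable_of_bdd
      (((hv.approxBounded C n).stronglyMeasurable.mono hm').aestronglyMeasurable)
      (hv.norm_approxBounded_le hC n)
  · exact .of_forall fun ω => hv.tendsto_approxBounded_of_norm_le (hvC ω)
  · exact fun n => .of_forall (hv.norm_approxBounded_le hC n)
  · exact fun n => hsimple _

/-- On each atom `{X = a}`, a set of `m ⊔ σ(X)` agrees with a set of `m`. -/
lemma subst_set {𝒳 : Type*} {m : MeasurableSpace Ω} {mX : MeasurableSpace 𝒳} {X : Ω → 𝒳} (a : 𝒳) :
    ∀ s : Set Ω, MeasurableSet[m ⊔ MeasurableSpace.comap X mX] s →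
      ∃ t : Set Ω, MeasurableSet[m] t ∧ s ∩ {ω | X ω = a} = t ∩ {ω | X ω = a} := by
  let S : MeasurableSpace Ω :=
  { MeasurableSet' := fun s => ∃ t, MeasurableSet[m] t ∧
      s ∩ {ω | X ω = a} = t ∩ {ω | X ω = a}
    measurableSet_empty := ⟨∅, @MeasurableSet.empty Ω m, rfl⟩
    measurableSet_compl := by
      rintro s ⟨t, ht, hst⟩
      refine ⟨tᶜ, m.measurableSet_compl t ht, ?_⟩
      ext ω
      by_cases hω : X ω = a
      · have := Set.ext_iff.mp hst ω
        simp only [Set.mem_inter_iff, Set.mem_setOf_eq, hω, and_true] at this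
        simp [hω, this]
      · simp [hω]
    measurableSet_iUnion := by
      intro s hs
      choose t ht hst using hs
      refine ⟨⋃ n, t n, m.measurableSet_iUnion t ht, ?_⟩
      rw [Set.iUnion_inter, Set.iUnion_inter]
      exact Set.iUnion_congr hst }
  have hle : m ⊔ MeasurableSpace.comap X mX ≤ S := by
    refine sup_le (fun s hs => ⟨s, hs, rfl⟩) ?_
    rintro s ⟨B, hB, rfl⟩
    by_cases ha : a ∈ B
    · refine ⟨Set.univ, @MeasurableSet.univ Ω m, ?_⟩
      ext ω
      by_cases hω : X ω = a
      · simp [hω, Set.mem_preimage, ha]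
      · simp [hω]
    · refine ⟨∅, @MeasurableSet.empty Ω m, ?_⟩
      ext ω
      by_cases hω : X ω = a
      · simp [hω, Set.mem_preimage, ha]
      · simp [hω]
  exact fun s hs => hle s hs

/-- On the atom `{X = a}`, a bounded `m ⊔ σ(X)`-measurable function agrees with an
`m`-measurable function. -/
lemma subst_fun {𝒳 : Type*} {m : MeasurableSpace Ω} {mX : MeasurableSpace 𝒳} {X : Ω → 𝒳} (a : 𝒳)
    {w : Ω → ℝ} (hw : StronglyMeasurable[m ⊔ MeasurableSpace.comap X mX] w)
    {C : ℝ} (hC : 0 ≤ C) (hwC : ∀ ω, ‖w ω‖ ≤ C) :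
    ∃ u : Ω → ℝ, StronglyMeasurable[m] u ∧ ∀ ω, X ω = a → u ω = w ω := by
  have hsf : ∀ s : @SimpleFunc Ω (m ⊔ MeasurableSpace.comap X mX) ℝ,
      ∃ u : Ω → ℝ, StronglyMeasurable[m] u ∧ ∀ ω, X ω = a → u ω = s ω := by
    refine fun s => @SimpleFunc.induction Ω ℝ (m ⊔ MeasurableSpace.comap X mX) _
      (fun s => ∃ u : Ω → ℝ, StronglyMeasurable[m] u ∧ ∀ ω, X ω = a → u ω = s ω) ?_ ?_ s
    · intro c t ht
      obtain ⟨t', ht', htt'⟩ := subst_set a t ht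
      refine ⟨t'.indicator fun _ => c, stronglyMeasurable_const.indicator ht', fun ω hω => ?_⟩
      have hiff : ω ∈ t ↔ ω ∈ t' := by
        have := Set.ext_iff.mp htt' ω
        simpa [hω] using this
      simp only [SimpleFunc.piecewise_apply, SimpleFunc.coe_const, Function.const_apply,
        SimpleFunc.coe_zero, Pi.zero_apply, Set.indicator_apply]
      by_cases hmem : ω ∈ t
      · simp [hmem, hiff.mp hmem]
      · have hmem' : ω ∉ t' := fun h => hmem (hiff.mpr h)
        simp [hmem, hmem']
    · intro f g _ hf hg
      obtain ⟨u₁, hu₁, hu₁a⟩ := hf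
      obtain ⟨u₂, hu₂, hu₂a⟩ := hg
      exact ⟨u₁ + u₂, hu₁.add hu₂, fun ω hω => by
        simp [SimpleFunc.coe_add, hu₁a ω hω, hu₂a ω hω]⟩
  choose u hu hua using fun n => hsf (hw.approxBounded C n)
  refine ⟨fun ω => liminf (fun n => u n ω) atTop, ?_, ?_⟩
  · exact (Measurable.liminf fun n => (hu n).measurable).stronglyMeasurable
  · intro ω hω
    have htend : Tendsto (fun n => u n ω) atTop (𝓝 (w ω)) := by
      have h1 := hw.tendsto_approxBounded_of_norm_le (hwC ω)
      have : (fun n => u n ω) = fun n => hw.approxBounded C n ω := by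
        funext n; exact hua n ω hω
      rw [this]; exact h1
    exact htend.liminf_eq

lemma ind_nonneg {A : Set Ω} (ω : Ω) : 0 ≤ ind A ω := by
  classical
  unfold ind
  rw [Set.indicator_apply]
  split_ifs <;> simp

lemma ind_le_one {A : Set Ω} (ω : Ω) : ind A ω ≤ 1 := by
  classical
  unfold ind
  rw [Set.indicator_apply]
  split_ifs <;> simp

lemma norm_mul_le_one {f g : Ω → ℝ} (hf : ∀ ω, ‖f ω‖ ≤ 1) (hg : ∀ ω, ‖g ω‖ ≤ 1)
    (ω : Ω) : ‖(f * g) ω‖ ≤ 1 := by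
  rw [Pi.mul_apply, norm_mul]
  calc ‖f ω‖ * ‖g ω‖ ≤ 1 * 1 :=
        mul_le_mul (hf ω) (hg ω) (norm_nonneg _) zero_le_one
    _ = 1 := one_mul 1

lemma eventuallyEq_finset_sum {ι : Type*} (μ : Measure Ω) (s : Finset ι) (f g : ι → Ω → ℝ)
    (h : ∀ i ∈ s, f i =ᵐ[μ] g i) : (∑ i ∈ s, f i) =ᵐ[μ] ∑ i ∈ s, g i := by
  classical
  induction s using Finset.induction_on with
  | empty => simp
  | @insert a s hni ih =>
    rw [Finset.sum_insert hni, Finset.sum_insert hni]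
    exact (h a (Finset.mem_insert_self a s)).add (ih fun i hi => h i (Finset.mem_insert_of_mem hi))

/-- Truncation of a real function to `[0,1]`. -/
def trunc (f : Ω → ℝ) : Ω → ℝ := fun ω => max 0 (min (f ω) 1)

lemma trunc_sm {m : MeasurableSpace Ω} {f : Ω → ℝ} (hf : StronglyMeasurable[m] f) :
    StronglyMeasurable[m] (trunc f) :=
  stronglyMeasurable_const.sup (hf.inf stronglyMeasurable_const)

lemma trunc_nonneg (f : Ω → ℝ) (ω : Ω) : 0 ≤ trunc f ω := le_max_left 0 _

lemma trunc_le_one (f : Ω → ℝ) (ω : Ω) : trunc f ω ≤ 1 :=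
  max_le zero_le_one (min_le_right _ 1)

lemma trunc_norm_le (f : Ω → ℝ) (ω : Ω) : ‖trunc f ω‖ ≤ 1 := by
  rw [Real.norm_eq_abs, abs_le]
  exact ⟨by linarith [trunc_nonneg f ω], trunc_le_one f ω⟩

lemma trunc_eq_of {f : Ω → ℝ} {ω : Ω} (h0 : 0 ≤ f ω) (h1 : f ω ≤ 1) : trunc f ω = f ω := by
  unfold trunc
  rw [min_eq_left h1, max_eq_right h0]

lemma ind_inter (A B : Set Ω) : ind (A ∩ B) = ind A * ind B := by
  classical
  funext ω
  by_cases h1 : ω ∈ A <;> by_cases h2 : ω ∈ B <;>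
    simp [ind, Set.indicator_apply, h1, h2]


end BeliefAux


/-- The heart of the induction step, stated abstractly. -/
lemma main_cylinder {Ω 𝒳 H : Type*} [m0 : MeasurableSpace Ω]
    [MeasurableSpace 𝒳] [MeasurableSpace H]
    (μ : Measure Ω) [IsProbabilityMeasure μ]
    (hk : Ω → H) (Xk1 : Ω → 𝒳) (a : 𝒳) (IG : Ω → ℝ)
    {nk nk1 m' : MeasurableSpace Ω}
    (hnk_le : nk ≤ m0) (hnk1_le : nk1 ≤ m0) (hm'_le : m' ≤ m0)
    (hmk_le : MeasurableSpace.comap hk inferInstance ≤ m0)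
    (hp_le : MeasurableSpace.comap (fun ω => (hk ω, Xk1 ω)) inferInstance ≤ m0)
    (hmk_nk : MeasurableSpace.comap hk inferInstance ≤ nk)
    (hnk_nk1 : nk ≤ nk1)
    (hX_nk1 : MeasurableSpace.comap Xk1 inferInstance ≤ nk1)
    (ha : MeasurableSet ({a} : Set 𝒳))
    (hIG_meas : Measurable[m0] IG) (hIG01 : ∀ ω, 0 ≤ IG ω ∧ IG ω ≤ 1)
    (hIH' : μ[IG|m'] =ᵐ[μ] μ[IG|nk1])
    (hnext' : μ[ind {ω' | Xk1 ω' = a}|MeasurableSpace.comap hk inferInstance]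
        =ᵐ[μ] μ[ind {ω' | Xk1 ω' = a}|nk])
    (htrans' : ∀ s : Set Ω, MeasurableSet[m'] s →
        μ[ind s|MeasurableSpace.comap (fun ω => (hk ω, Xk1 ω)) inferInstance]
          =ᵐ[μ] μ[ind s|nk1]) :
    μ[ind {ω' | Xk1 ω' = a} * IG|MeasurableSpace.comap hk inferInstance]
      =ᵐ[μ] μ[ind {ω' | Xk1 ω' = a} * IG|nk] := by
  letI : MeasurableSpace Ω := m0
  haveI := isFiniteMeasure_trim (μ := μ) hnk_le
  haveI := isFiniteMeasure_trim (μ := μ) hnk1_le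
  haveI := isFiniteMeasure_trim (μ := μ) hmk_le
  -- The atom set and its indicator
  have hA_comap : MeasurableSet[MeasurableSpace.comap Xk1 inferInstance] {ω' | Xk1 ω' = a} :=
    ⟨{a}, ha, rfl⟩
  have hA_nk1 : MeasurableSet[nk1] {ω' | Xk1 ω' = a} := hX_nk1 _ hA_comap
  have hA_m0 : MeasurableSet {ω' | Xk1 ω' = a} := hnk1_le _ hA_nk1
  have hIA_nk1 : StronglyMeasurable[nk1] (ind {ω' | Xk1 ω' = a}) :=
    stronglyMeasurable_one.indicator hA_nk1
  have hIA_m0 : StronglyMeasurable (ind {ω' | Xk1 ω' = a}) :=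
    stronglyMeasurable_one.indicator hA_m0
  have hIA_int : Integrable (ind {ω' | Xk1 ω' = a}) μ :=
    integrable_of_bdd (μ := μ) (hIA_m0.aestronglyMeasurable (μ := μ)) (norm_ind_le _)
  have hIG_norm : ∀ ω, ‖IG ω‖ ≤ 1 := fun ω => by
    rw [Real.norm_eq_abs, abs_le]
    constructor
    · linarith [(hIG01 ω).1]
    · exact (hIG01 ω).2
  have hIG_int : Integrable IG μ :=
    integrable_of_bdd (μ := μ) (hIG_meas.stronglyMeasurable.aestronglyMeasurable (μ := μ)) hIG_norm
  have hIAIG_int : Integrable (ind {ω' | Xk1 ω' = a} * IG) μ :=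
    integrable_of_bdd (μ := μ) ((hIA_m0.mul hIG_meas.stronglyMeasurable).aestronglyMeasurable (μ := μ))
      (norm_mul_le_one (norm_ind_le _) hIG_norm)
  -- the truncated conditional expectation v of IG given m'
  set v : Ω → ℝ := trunc (μ[IG|m']) with hv_def
  have hv_sm : StronglyMeasurable[m'] v := trunc_sm stronglyMeasurable_condExp
  have hv01 : ∀ ω, 0 ≤ v ω ∧ v ω ≤ 1 := fun ω => ⟨trunc_nonneg _ ω, trunc_le_one _ ω⟩
  have hv_norm : ∀ ω, ‖v ω‖ ≤ 1 := fun ω => trunc_norm_le _ ω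
  have hv_int : Integrable v μ :=
    integrable_of_bdd (μ := μ) ((hv_sm.mono hm'_le).aestronglyMeasurable (μ := μ)) hv_norm
  have hIG_nonneg : (0 : Ω → ℝ) ≤ᵐ[μ] IG := .of_forall fun ω => (hIG01 ω).1
  have hce_nonneg : (0 : Ω → ℝ) ≤ᵐ[μ] μ[IG|m'] := condExp_nonneg hIG_nonneg
  have hce_le_one : μ[IG|m'] ≤ᵐ[μ] (fun _ => (1 : ℝ)) := by
    have hmono := condExp_mono (m := m') hIG_int (integrable_const (1 : ℝ))
      (ae_of_all μ fun ω => (hIG01 ω).2)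
    rwa [condExp_const hm'_le (1 : ℝ)] at hmono
  have hv_ae : v =ᵐ[μ] μ[IG|m'] := by
    filter_upwards [hce_nonneg, hce_le_one] with ω h0 h1
    rw [hv_def]
    exact trunc_eq_of h0 h1
  -- extended transition consistency
  have htrans'' : μ[v|MeasurableSpace.comap (fun ω => (hk ω, Xk1 ω)) inferInstance]
      =ᵐ[μ] μ[v|nk1] :=
    condexp_eq_condexp_of_indicator hm'_le hp_le hnk1_le htrans' hv_sm zero_le_one hv_norm
  -- the truncated conditional expectation w of v given the pair σ-algebra
  set w : Ω → ℝ :=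
    trunc (μ[v|MeasurableSpace.comap (fun ω => (hk ω, Xk1 ω)) inferInstance]) with hw_def
  have hw_sm : StronglyMeasurable[MeasurableSpace.comap (fun ω => (hk ω, Xk1 ω)) inferInstance]
      w := trunc_sm stronglyMeasurable_condExp
  have hw01 : ∀ ω, 0 ≤ w ω ∧ w ω ≤ 1 := fun ω => ⟨trunc_nonneg _ ω, trunc_le_one _ ω⟩
  have hw_norm : ∀ ω, ‖w ω‖ ≤ 1 := fun ω => trunc_norm_le _ ω
  have hv_nonneg : (0 : Ω → ℝ) ≤ᵐ[μ] v := .of_forall fun ω => (hv01 ω).1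
  have hwce_nonneg : (0 : Ω → ℝ) ≤ᵐ[μ]
      μ[v|MeasurableSpace.comap (fun ω => (hk ω, Xk1 ω)) inferInstance] :=
    condExp_nonneg hv_nonneg
  have hwce_le_one : μ[v|MeasurableSpace.comap (fun ω => (hk ω, Xk1 ω)) inferInstance]
      ≤ᵐ[μ] (fun _ => (1 : ℝ)) := by
    have hmono := condExp_mono
      (m := MeasurableSpace.comap (fun ω => (hk ω, Xk1 ω)) inferInstance)
      hv_int (integrable_const (1 : ℝ))
      (ae_of_all μ fun ω => (hv01 ω).2)
    rwa [condExp_const hp_le (1 : ℝ)] at hmono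
  have hw_ae : w =ᵐ[μ] μ[v|MeasurableSpace.comap (fun ω => (hk ω, Xk1 ω)) inferInstance] := by
    filter_upwards [hwce_nonneg, hwce_le_one] with ω h0 h1
    rw [hw_def]
    exact trunc_eq_of h0 h1
  -- substitute: on the atom, w agrees with an (comap hk)-measurable function
  have hp_eq : MeasurableSpace.comap (fun ω => (hk ω, Xk1 ω)) inferInstance
      = MeasurableSpace.comap hk inferInstance ⊔ MeasurableSpace.comap Xk1 inferInstance := by
    rw [show (inferInstance : MeasurableSpace (H × 𝒳))
        = MeasurableSpace.comap Prod.fst inferInstance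
          ⊔ MeasurableSpace.comap Prod.snd inferInstance from rfl,
      MeasurableSpace.comap_sup, MeasurableSpace.comap_comp, MeasurableSpace.comap_comp]
    rfl
  have hw_sm' : StronglyMeasurable[MeasurableSpace.comap hk inferInstance
      ⊔ MeasurableSpace.comap Xk1 inferInstance] w := hp_eq ▸ hw_sm
  obtain ⟨u, hu_sm, hu_eq⟩ := subst_fun (m := MeasurableSpace.comap hk inferInstance)
    (mX := inferInstance) (X := Xk1) a hw_sm' zero_le_one hw_norm
  set u' : Ω → ℝ := trunc u with hu'_def
  have hu'_sm : StronglyMeasurable[MeasurableSpace.comap hk inferInstance] u' :=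
    trunc_sm hu_sm
  have hu'_norm : ∀ ω, ‖u' ω‖ ≤ 1 := fun ω => trunc_norm_le _ ω
  have hIAw : ind {ω' | Xk1 ω' = a} * w = ind {ω' | Xk1 ω' = a} * u' := by
    funext ω
    rw [Pi.mul_apply, Pi.mul_apply]
    by_cases hω : Xk1 ω = a
    · have huw : u ω = w ω := hu_eq ω hω
      have hval : u' ω = w ω := by
        rw [hu'_def]
        show trunc u ω = w ω
        unfold trunc
        rw [huw, min_eq_left (hw01 ω).2, max_eq_right (hw01 ω).1]
      rw [hval]
    · have : ind {ω' | Xk1 ω' = a} ω = 0 := by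
        unfold ind
        rw [Set.indicator_of_notMem]
        exact hω
      rw [this, zero_mul, zero_mul]
  -- integrability facts
  have hIAv_int : Integrable (ind {ω' | Xk1 ω' = a} * v) μ :=
    integrable_of_bdd (μ := μ) ((hIA_m0.mul (hv_sm.mono hm'_le)).aestronglyMeasurable (μ := μ))
      (norm_mul_le_one (norm_ind_le _) hv_norm)
  have hu'IA_int : Integrable (u' * ind {ω' | Xk1 ω' = a}) μ :=
    integrable_of_bdd (μ := μ) (((hu'_sm.mono hmk_le).mul hIA_m0).aestronglyMeasurable (μ := μ))
      (norm_mul_le_one hu'_norm (norm_ind_le _))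
  -- step 1: project IA * IG onto nk1
  have hstep1 : μ[ind {ω' | Xk1 ω' = a} * IG|nk1] =ᵐ[μ] ind {ω' | Xk1 ω' = a} * v :=
    calc μ[ind {ω' | Xk1 ω' = a} * IG|nk1]
        =ᵐ[μ] ind {ω' | Xk1 ω' = a} * μ[IG|nk1] :=
          condExp_mul_of_stronglyMeasurable_left hIA_nk1 hIAIG_int hIG_int
      _ =ᵐ[μ] ind {ω' | Xk1 ω' = a} * v := by
          filter_upwards [hIH', hv_ae] with ω h1 h2
          rw [Pi.mul_apply, Pi.mul_apply, ← h1, ← h2]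
  -- step 2: project IA * v onto nk1
  have hstep2 : μ[ind {ω' | Xk1 ω' = a} * v|nk1] =ᵐ[μ] ind {ω' | Xk1 ω' = a} * u' :=
    calc μ[ind {ω' | Xk1 ω' = a} * v|nk1]
        =ᵐ[μ] ind {ω' | Xk1 ω' = a} * μ[v|nk1] :=
          condExp_mul_of_stronglyMeasurable_left hIA_nk1 hIAv_int hv_int
      _ =ᵐ[μ] ind {ω' | Xk1 ω' = a} * w := by
          filter_upwards [htrans'', hw_ae] with ω h1 h2
          rw [Pi.mul_apply, Pi.mul_apply, ← h1, ← h2]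
      _ =ᵐ[μ] ind {ω' | Xk1 ω' = a} * u' := by rw [hIAw]
  -- step 3: the nk-conditional expectation
  have hRHS : μ[ind {ω' | Xk1 ω' = a} * IG|nk]
      =ᵐ[μ] u' * μ[ind {ω' | Xk1 ω' = a}|MeasurableSpace.comap hk inferInstance] :=
    calc μ[ind {ω' | Xk1 ω' = a} * IG|nk]
        =ᵐ[μ] μ[μ[ind {ω' | Xk1 ω' = a} * IG|nk1]|nk] :=
          (condExp_condExp_of_le hnk_nk1 hnk1_le).symm
      _ =ᵐ[μ] μ[ind {ω' | Xk1 ω' = a} * v|nk] := condExp_congr_ae hstep1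
      _ =ᵐ[μ] μ[μ[ind {ω' | Xk1 ω' = a} * v|nk1]|nk] :=
          (condExp_condExp_of_le hnk_nk1 hnk1_le).symm
      _ =ᵐ[μ] μ[ind {ω' | Xk1 ω' = a} * u'|nk] := condExp_congr_ae hstep2
      _ =ᵐ[μ] μ[u' * ind {ω' | Xk1 ω' = a}|nk] := by rw [mul_comm]
      _ =ᵐ[μ] u' * μ[ind {ω' | Xk1 ω' = a}|nk] :=
          condExp_mul_of_stronglyMeasurable_left (hu'_sm.mono hmk_nk) hu'IA_int hIA_int
      _ =ᵐ[μ] u' * μ[ind {ω' | Xk1 ω' = a}|MeasurableSpace.comap hk inferInstance] := by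
          filter_upwards [hnext'] with ω hω
          rw [Pi.mul_apply, Pi.mul_apply, ← hω]
  have hfinal_sm : StronglyMeasurable[MeasurableSpace.comap hk inferInstance]
      (u' * μ[ind {ω' | Xk1 ω' = a}|MeasurableSpace.comap hk inferInstance]) :=
    hu'_sm.mul stronglyMeasurable_condExp
  have hfinal_int : Integrable
      (u' * μ[ind {ω' | Xk1 ω' = a}|MeasurableSpace.comap hk inferInstance]) μ :=
    integrable_condExp.bdd_mul (hu'_sm.mono hmk_le).aestronglyMeasurable (μ := μ) (c := 1) (.of_forall hu'_norm)
  calc μ[ind {ω' | Xk1 ω' = a} * IG|MeasurableSpace.comap hk inferInstance]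
      =ᵐ[μ] μ[μ[ind {ω' | Xk1 ω' = a} * IG|nk]|MeasurableSpace.comap hk inferInstance] :=
        (condExp_condExp_of_le hmk_nk hnk_le).symm
    _ =ᵐ[μ] μ[u' * μ[ind {ω' | Xk1 ω' = a}|MeasurableSpace.comap hk inferInstance]|
          MeasurableSpace.comap hk inferInstance] := condExp_congr_ae hRHS
    _ =ᵐ[μ] u' * μ[ind {ω' | Xk1 ω' = a}|MeasurableSpace.comap hk inferInstance] := by
        rw [condExp_of_stronglyMeasurable hmk_le hfinal_sm hfinal_int]
    _ =ᵐ[μ] μ[ind {ω' | Xk1 ω' = a} * IG|nk] := hRHS.symm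
/-- **induction step.** Fix `1 ≤ k ≤ T-2`. If `h (k+1)` is a belief state
for `X_{1:k+1}`, next-token consistency holds at time `k`, and transition consistency
holds at time `k`, then `h k` is a belief state for `X_{1:k}`. -/
theorem induction_step_belief_state
    {Ω 𝒳 H : Type*}
    [MeasurableSpace Ω] [MeasurableSpace 𝒳] [DiscreteMeasurableSpace 𝒳]
    [Fintype 𝒳] [Nonempty 𝒳]
    [MeasurableSpace H] [StandardBorelSpace H]
    (μ : Measure Ω) [IsProbabilityMeasure μ]
    (T : ℕ) (hT : 2 ≤ T)
    (X : ℕ → Ω → 𝒳) (hX : ∀ t, Measurable (X t))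
    (h : ℕ → Ω → H) (g : (t : ℕ) → (Fin t → 𝒳) → H)
    (hg : ∀ t, 1 ≤ t → t ≤ T → Measurable (g t))
    (hgh : ∀ t, 1 ≤ t → t ≤ T → ∀ ω, h t ω = g t (tup X 0 t ω))
    (k : ℕ) (hk1 : 1 ≤ k) (hk2 : k ≤ T - 2)
    -- `h (k+1)` is a belief state for `X_{1:k+1}`
    (hIH : ∀ f : (Fin (T - (k + 1)) → 𝒳) → ℝ, Measurable f → (∃ C, ∀ y, |f y| ≤ C) →
      (μ[fun ω => f (tup X (k + 1) (T - (k + 1)) ω) |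
          MeasurableSpace.comap (h (k + 1)) inferInstance])
        =ᵐ[μ]
      (μ[fun ω => f (tup X (k + 1) (T - (k + 1)) ω) |
          MeasurableSpace.comap (tup X 0 (k + 1)) inferInstance]))
    -- next-token consistency at time `k`
    (hnext : ∀ a : 𝒳,
      (μ[ind {ω | X (k + 1) ω = a} | MeasurableSpace.comap (h k) inferInstance])
        =ᵐ[μ]
      (μ[ind {ω | X (k + 1) ω = a} | MeasurableSpace.comap (tup X 0 k) inferInstance]))
    -- transition consistency at time `k`
    (htrans : ∀ B : Set H, MeasurableSet B →
      (μ[ind {ω | h (k + 1) ω ∈ B} |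
          MeasurableSpace.comap (fun ω => (h k ω, X (k + 1) ω)) inferInstance])
        =ᵐ[μ]
      (μ[ind {ω | h (k + 1) ω ∈ B} |
          MeasurableSpace.comap (tup X 0 (k + 1)) inferInstance])) :
    -- conclusion: `h k` is a belief state for `X_{1:k}`
    ∀ f : (Fin (T - k) → 𝒳) → ℝ, Measurable f → (∃ C, ∀ y, |f y| ≤ C) →
      (μ[fun ω => f (tup X k (T - k) ω) | MeasurableSpace.comap (h k) inferInstance])
        =ᵐ[μ]
      (μ[fun ω => f (tup X k (T - k) ω) |
          MeasurableSpace.comap (tup X 0 k) inferInstance]) := by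
  classical
  intro f hfmeas hfbdd
  obtain ⟨Cf, hCf⟩ := hfbdd
  have hkT : k ≤ T := by omega
  have hk1T : k + 1 ≤ T := by omega
  -- measurability basics
  have htupm : ∀ s n : ℕ, Measurable (tup X s n) := fun s n =>
    measurable_pi_lambda _ fun i => hX _
  have hgk := hg k hk1 hkT
  have hgk1 := hg (k + 1) (by omega) hk1T
  have hhk_eq : h k = g k ∘ tup X 0 k := funext fun ω => hgh k hk1 hkT ω
  have hhk1_eq : h (k + 1) = g (k + 1) ∘ tup X 0 (k + 1) :=
    funext fun ω => hgh (k + 1) (by omega) hk1T ω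
  have hhk : Measurable (h k) := hhk_eq ▸ hgk.comp (htupm 0 k)
  have hhk1 : Measurable (h (k + 1)) := hhk1_eq ▸ hgk1.comp (htupm 0 (k + 1))
  -- σ-algebra inequalities
  have hmk_le : MeasurableSpace.comap (h k) inferInstance ≤ ‹MeasurableSpace Ω› :=
    hhk.comap_le
  have hm'_le : MeasurableSpace.comap (h (k + 1)) inferInstance ≤ ‹MeasurableSpace Ω› :=
    hhk1.comap_le
  have hnk_le : MeasurableSpace.comap (tup X 0 k) inferInstance ≤ ‹MeasurableSpace Ω› :=
    (htupm 0 k).comap_le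
  have hnk1_le : MeasurableSpace.comap (tup X 0 (k + 1)) inferInstance ≤ ‹MeasurableSpace Ω› :=
    (htupm 0 (k + 1)).comap_le
  have hp_le : MeasurableSpace.comap (fun ω => (h k ω, X (k + 1) ω)) inferInstance
      ≤ ‹MeasurableSpace Ω› := (hhk.prodMk (hX (k + 1))).comap_le
  have hmk_nk : MeasurableSpace.comap (h k) inferInstance
      ≤ MeasurableSpace.comap (tup X 0 k) inferInstance := by
    rw [hhk_eq, ← MeasurableSpace.comap_comp]
    exact MeasurableSpace.comap_mono (measurable_iff_comap_le.mp hgk)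
  have hm'_nk1 : MeasurableSpace.comap (h (k + 1)) inferInstance
      ≤ MeasurableSpace.comap (tup X 0 (k + 1)) inferInstance := by
    rw [hhk1_eq, ← MeasurableSpace.comap_comp]
    exact MeasurableSpace.comap_mono (measurable_iff_comap_le.mp hgk1)
  have hres : tup X 0 k = (fun (v : Fin (k + 1) → 𝒳) (i : Fin k) => v i.castSucc)
      ∘ tup X 0 (k + 1) := by
    funext ω i
    rfl
  have hnk_nk1 : MeasurableSpace.comap (tup X 0 k) inferInstance
      ≤ MeasurableSpace.comap (tup X 0 (k + 1)) inferInstance := by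
    rw [hres, ← MeasurableSpace.comap_comp]
    exact MeasurableSpace.comap_mono (measurable_iff_comap_le.mp
      (measurable_pi_lambda _ fun i => measurable_pi_apply _))
  have hXk1_eq : X (k + 1)
      = (fun v : Fin (k + 1) → 𝒳 => v ⟨k, by omega⟩) ∘ tup X 0 (k + 1) := by
    funext ω
    show X (k + 1) ω = X (0 + 1 + k) ω
    rw [show 0 + 1 + k = k + 1 from by omega]
  have hX_nk1 : MeasurableSpace.comap (X (k + 1)) inferInstance
      ≤ MeasurableSpace.comap (tup X 0 (k + 1)) inferInstance := by
    rw [hXk1_eq, ← MeasurableSpace.comap_comp]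
    exact MeasurableSpace.comap_mono (measurable_iff_comap_le.mp (measurable_pi_apply _))
  -- singleton sets of tuples are measurable
  have hsing : ∀ (n : ℕ) (y : Fin n → 𝒳), MeasurableSet ({y} : Set (Fin n → 𝒳)) := by
    intro n y
    have hy : ({y} : Set (Fin n → 𝒳)) = ⋂ i, (fun z : Fin n → 𝒳 => z i) ⁻¹' {y i} := by
      ext z
      simp [funext_iff]
    rw [hy]
    exact MeasurableSet.iInter fun i =>
      (measurable_pi_apply i) (MeasurableSet.singleton (y i))
  -- the per-cylinder statement
  have key : ∀ y : Fin (T - k) → 𝒳,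
      μ[ind {ω | tup X k (T - k) ω = y}|MeasurableSpace.comap (h k) inferInstance]
        =ᵐ[μ]
      μ[ind {ω | tup X k (T - k) ω = y}|MeasurableSpace.comap (tup X 0 k) inferInstance] := by
    intro y
    have h0lt : 0 < T - k := by omega
    set y' : Fin (T - (k + 1)) → 𝒳 :=
      fun j => y ⟨(j : ℕ) + 1, by have := j.isLt; omega⟩ with hy'
    have hcyl : {ω | tup X k (T - k) ω = y}
        = {ω | X (k + 1) ω = y ⟨0, h0lt⟩} ∩ {ω | tup X (k + 1) (T - (k + 1)) ω = y'} := by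
      ext ω
      simp only [Set.mem_setOf_eq, Set.mem_inter_iff]
      constructor
      · intro hyy
        refine ⟨congrFun hyy ⟨0, h0lt⟩, ?_⟩
        funext j
        have hj := congrFun hyy ⟨(j : ℕ) + 1, by have := j.isLt; omega⟩
        rw [hy']
        show X (k + 1 + 1 + (j : ℕ)) ω = y ⟨(j : ℕ) + 1, by have := j.isLt; omega⟩
        rw [show k + 1 + 1 + (j : ℕ) = k + 1 + ((j : ℕ) + 1) from by omega]
        exact hj
      · rintro ⟨h1, h2⟩
        funext i
        rcases i with ⟨i, hi⟩
        cases i with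
        | zero => exact h1
        | succ j =>
          have hj := congrFun h2 ⟨j, by omega⟩
          rw [hy'] at hj
          show X (k + 1 + (j + 1)) ω = y ⟨j + 1, hi⟩
          rw [show k + 1 + (j + 1) = k + 1 + 1 + j from by omega]
          exact hj
    rw [hcyl, ind_inter]
    refine main_cylinder μ (h k) (X (k + 1)) (y ⟨0, h0lt⟩)
      (ind {ω | tup X (k + 1) (T - (k + 1)) ω = y'})
      hnk_le hnk1_le hm'_le hmk_le hp_le hmk_nk hnk_nk1 hX_nk1
      (MeasurableSet.singleton _) ?_ ?_ ?_ ?_ ?_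
    · exact measurable_one.indicator ((htupm (k + 1) (T - (k + 1))) (hsing _ y'))
    · exact fun ω => ⟨ind_nonneg ω, ind_le_one ω⟩
    · -- hIH'
      have hcomp : (fun ω => Set.indicator ({y'} : Set (Fin (T - (k + 1)) → 𝒳))
            (fun _ => (1 : ℝ)) (tup X (k + 1) (T - (k + 1)) ω))
          = ind {ω | tup X (k + 1) (T - (k + 1)) ω = y'} := by
        funext ω
        by_cases hω : tup X (k + 1) (T - (k + 1)) ω = y'
        · have hm1 : tup X (k + 1) (T - (k + 1)) ω ∈ ({y'} : Set (Fin (T - (k + 1)) → 𝒳)) := hω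
          have hm2 : ω ∈ {ω | tup X (k + 1) (T - (k + 1)) ω = y'} := hω
          unfold ind
          rw [Set.indicator_of_mem hm1, Set.indicator_of_mem hm2]
          rfl
        · have hm1 : tup X (k + 1) (T - (k + 1)) ω ∉ ({y'} : Set (Fin (T - (k + 1)) → 𝒳)) := hω
          have hm2 : ω ∉ {ω | tup X (k + 1) (T - (k + 1)) ω = y'} := hω
          unfold ind
          rw [Set.indicator_of_notMem hm1, Set.indicator_of_notMem hm2]
      have hIH2 := hIH (Set.indicator ({y'} : Set (Fin (T - (k + 1)) → 𝒳)) (fun _ => (1 : ℝ)))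
        (measurable_const.indicator (hsing _ y'))
        ⟨1, fun z => by
          rw [Set.indicator_apply]
          split_ifs <;> simp⟩
      rw [hcomp] at hIH2
      exact hIH2
    · exact hnext (y ⟨0, h0lt⟩)
    · rintro s ⟨B, hB, rfl⟩
      exact htrans B hB
  -- reduce the general bounded `f` to cylinder indicators
  have hrw : (fun ω => f (tup X k (T - k) ω))
      = ∑ y : Fin (T - k) → 𝒳, (fun ω => f y * ind {ω' | tup X k (T - k) ω' = y} ω) := by
    funext ω
    rw [Finset.sum_apply]
    rw [Finset.sum_eq_single (tup X k (T - k) ω)]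
    · have hmem : ω ∈ {ω' | tup X k (T - k) ω' = tup X k (T - k) ω} := rfl
      unfold ind
      rw [Set.indicator_of_mem hmem]
      simp
    · intro y _ hy
      have hnmem : ω ∉ {ω' | tup X k (T - k) ω' = y} := fun hmem => hy hmem.symm
      unfold ind
      rw [Set.indicator_of_notMem hnmem]
      simp
    · intro hmem
      exact absurd (Finset.mem_univ _) hmem
  rw [hrw]
  have hint : ∀ y : Fin (T - k) → 𝒳,
      Integrable (fun ω => f y * ind {ω' | tup X k (T - k) ω' = y} ω) μ := by
    intro y
    refine integrable_of_bdd (C := Cf) ?_ ?_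
    · exact (measurable_const.mul
        (measurable_one.indicator ((htupm k (T - k)) (hsing _ y)))).aestronglyMeasurable
    · intro ω
      rw [norm_mul]
      calc ‖f y‖ * ‖ind {ω' | tup X k (T - k) ω' = y} ω‖ ≤ Cf * 1 :=
            mul_le_mul (by rw [Real.norm_eq_abs]; exact hCf y) (norm_ind_le _ ω)
              (norm_nonneg _) ((abs_nonneg (f y)).trans (hCf y))
        _ = Cf := mul_one Cf
  have hsum : ∀ m : MeasurableSpace Ω,
      μ[(∑ y : Fin (T - k) → 𝒳, fun ω => f y * ind {ω' | tup X k (T - k) ω' = y} ω)|m]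
        =ᵐ[μ] ∑ y : Fin (T - k) → 𝒳,
          μ[(fun ω => f y * ind {ω' | tup X k (T - k) ω' = y} ω)|m] :=
    fun m => condExp_finsetSum (fun y _ => hint y) m
  refine (hsum _).trans (.trans ?_ ((hsum _).symm))
  refine eventuallyEq_finset_sum μ _ _ _ fun y _ => ?_
  calc μ[(fun ω => f y * ind {ω' | tup X k (T - k) ω' = y} ω)|
        MeasurableSpace.comap (h k) inferInstance]
      =ᵐ[μ] f y • μ[ind {ω' | tup X k (T - k) ω' = y}|
        MeasurableSpace.comap (h k) inferInstance] :=
        condExp_smul (f y) (ind {ω' | tup X k (T - k) ω' = y}) _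
    _ =ᵐ[μ] f y • μ[ind {ω' | tup X k (T - k) ω' = y}|
        MeasurableSpace.comap (tup X 0 k) inferInstance] := (key y).const_smul (f y)
    _ =ᵐ[μ] μ[(fun ω => f y * ind {ω' | tup X k (T - k) ω' = y} ω)|
        MeasurableSpace.comap (tup X 0 k) inferInstance] :=
        (condExp_smul (f y) (ind {ω' | tup X k (T - k) ω' = y}) _).symm
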